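/- arXiv:2201.05498 — 2 statements merged into one kernel-verified Lean document; each statement's English description precedes it below -/
import Mathlib

section
/- P-almost surely, for every k ∈ ℕ: ⟨∇f(x^k) − ∇f(x̂^k), x̄^{k+1} − x^k⟩_V ≤ τ L_res^V √p_max · Σ_{i=1}^m p_i ‖x̄^{k+1}_i − x^k_i‖² + α_k − E[α_{k+1} | i_0, …, i_{k−1}]. -/
open MeasureTheory ProbabilityTheory Filter Topology Set
open scoped BigOperators RealInnerProductSpace ENNReal

noncomputable section

set_option synthInstance.maxHeartbeats 400000
set_option maxHeartbeats 1000000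

variable {m : ℕ} {H : Fin m → Type*}
  [∀ i, NormedAddCommGroup (H i)] [∀ i, InnerProductSpace ℝ (H i)]

/-- The Hilbert direct sum `H = H₁ ⊕ ⋯ ⊕ H_m` is complete when each factor is. -/
instance [∀ i, CompleteSpace (H i)] : CompleteSpace (PiLp 2 H) :=
  inferInstance

/-- Weighted squared norm `∑ i, w i * ‖u i‖²` on the direct sum. -/
def wnormSq (w : Fin m → ℝ) (u : PiLp 2 H) : ℝ := ∑ i, w i * ‖u i‖ ^ 2

/-- Weighted inner product `∑ i, w i * ⟪u i, v i⟫` on the direct sum. -/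
def winner (w : Fin m → ℝ) (u v : PiLp 2 H) : ℝ := ∑ i, w i * ⟪u i, v i⟫

/-- `upd x i u` replaces the `i`-th coordinate of `x` by `u`. -/
def upd (x : PiLp 2 H) (i : Fin m) (u : H i) : PiLp 2 H := WithLp.toLp 2 (Function.update x i u)

/-- `IsProx c gi v pt` asserts that `pt` is the unique minimizer of
`u ↦ gi u + (1/(2c))‖u − v‖²`, i.e. `pt = prox_{c·gi}(v)`. -/
def IsProx {E : Type*} [NormedAddCommGroup E] (c : ℝ) (gi : E → ℝ) (v pt : E) : Prop :=
  (∀ u : E, gi pt + 1 / (2 * c) * ‖pt - v‖ ^ 2 ≤ gi u + 1 / (2 * c) * ‖u - v‖ ^ 2) ∧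
  (∀ u : E, gi u + 1 / (2 * c) * ‖u - v‖ ^ 2 ≤ gi pt + 1 / (2 * c) * ‖pt - v‖ ^ 2 → u = pt)

/-- The objective `F = f + g`, where `g x = ∑ i, g i (x i)`. -/
def Fobj (f : PiLp 2 H → ℝ) (g : ∀ i, H i → ℝ) (z : PiLp 2 H) : ℝ := f z + ∑ i, g i (z i)

/-- Delayed iterate `x̂^k`, coordinate `j` reads `x^{k - d^k_j}` (deterministic trajectory,
indices in `ℤ`, with `x^n = x^0` for `n ≤ 0`). -/
def xhatD (x : ℤ → PiLp 2 H) (d : ℕ → Fin m → ℕ) (k : ℕ) : PiLp 2 H :=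
  WithLp.toLp 2 fun j => x ((k : ℤ) - d k j) j

/-- Delayed iterate `x̂^k` (random trajectory). -/
def xhatP {Ω : Type*} (x : ℤ → Ω → PiLp 2 H) (d : ℕ → Fin m → ℕ) (k : ℕ) (ω : Ω) :
    PiLp 2 H :=
  WithLp.toLp 2 fun j => x ((k : ℤ) - d k j) ω j

/-- `alphaT c τ x k = c * ∑_{h=k-τ}^{k-1} (h-(k-τ)+1) ‖x^{h+1} - x^h‖²`. -/
def alphaT (c : ℝ) (τ : ℕ) (x : ℤ → PiLp 2 H) (k : ℕ) : ℝ :=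
  c * ∑ j ∈ Finset.range τ,
    ((j : ℝ) + 1) * ‖x ((k : ℤ) - τ + j + 1) - x ((k : ℤ) - τ + j)‖ ^ 2

/-- `alphaV p c τ x k ω = c * ∑_{h=k-τ}^{k-1} (h-(k-τ)+1) ‖x^{h+1} - x^h‖²_V`. -/
def alphaV {Ω : Type*} (p : Fin m → ℝ) (c : ℝ) (τ : ℕ) (x : ℤ → Ω → PiLp 2 H)
    (k : ℕ) (ω : Ω) : ℝ :=
  c * ∑ j ∈ Finset.range τ,
    ((j : ℝ) + 1) * wnormSq p (x ((k : ℤ) - τ + j + 1) ω - x ((k : ℤ) - τ + j) ω)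

/-- The constant `L_res^V/(2√p_max)` appearing in `α_k`, where `L_res^V = L_res √(p_max/p_min)`. -/
def alphaConst (Lres pmax pmin : ℝ) : ℝ :=
  Lres * Real.sqrt (pmax / pmin) / (2 * Real.sqrt pmax)

/-- The σ-algebra generated by `i_0, …, i_{k-1}`. -/
def pastFiltration {Ω : Type*} [MeasurableSpace Ω] (idx : ℕ → Ω → Fin m) (k : ℕ) :
    MeasurableSpace Ω :=
  ⨆ j ∈ Finset.range k, MeasurableSpace.comap (idx j) ⊤

/-- The random index set `J(k) = {h ∈ {k-τ,…,k-1} : d^k_{i_h} ≥ k-h}`. -/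
def Jset {Ω : Type*} (idx : ℕ → Ω → Fin m) (d : ℕ → Fin m → ℕ) (τ k : ℕ) (ω : Ω) :
    Finset ℕ :=
  (Finset.Ico (k - τ) k).filter fun h => k - h ≤ d k (idx h ω)

/- ===== auxiliary lemmas ===== -/

section AuxLemmas

set_option linter.unusedSectionVars false
set_option linter.unusedVariables false

lemma norm_tele_aux {E : Type*} [NormedAddCommGroup E] (y : ℕ → E) (a : ℕ) :
    ∀ b : ℕ, a ≤ b → ‖y b - y a‖ ≤ ∑ t ∈ Finset.Ico a b, ‖y (t+1) - y t‖ := by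
  intro b
  induction b with
  | zero => intro h; simp [Nat.le_zero.1 h]
  | succ b ih =>
    intro h
    rcases Nat.lt_or_ge a (b+1) with h' | h'
    · have hab : a ≤ b := Nat.lt_succ_iff.1 h'
      have h1 : y (b+1) - y a = (y (b+1) - y b) + (y b - y a) := by abel
      rw [Finset.sum_Ico_succ_top hab, h1]
      calc ‖(y (b+1) - y b) + (y b - y a)‖ ≤ ‖y (b+1) - y b‖ + ‖y b - y a‖ := norm_add_le _ _
        _ ≤ ‖y (b+1) - y b‖ + ∑ t ∈ Finset.Ico a b, ‖y (t+1) - y t‖ := by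
            linarith [ih hab]
        _ = _ := by ring
    · have : a = b+1 := le_antisymm h h'
      subst this; simp

lemma shift_sum_aux (V : ℕ → ℝ) (τ : ℕ) :
    ∑ j ∈ Finset.range τ, ((j:ℝ)+1) * V (j+1)
      = ∑ j ∈ Finset.range τ, (j:ℝ) * V j + τ * V τ := by
  have h1 := Finset.sum_range_succ (fun j => (j:ℝ) * V j) τ
  have h2 := Finset.sum_range_succ' (fun j => (j:ℝ) * V j) τ
  simp only [Nat.cast_zero, zero_mul, add_zero, Nat.cast_add, Nat.cast_one] at h1 h2
  have h3 : ∑ j ∈ Finset.range τ, ((j:ℝ)+1) * V (j+1)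
      = ∑ j ∈ Finset.range τ, (((j:ℝ))+1) * V (j+1) := rfl
  rw [h3]
  linarith [h1, h2]

variable {m : ℕ} {H : Fin m → Type*}
  [∀ i, NormedAddCommGroup (H i)] [∀ i, InnerProductSpace ℝ (H i)]

lemma wnormSq_nonneg_aux {p : Fin m → ℝ} (hp : ∀ i, 0 ≤ p i) (u : PiLp 2 H) :
    0 ≤ wnormSq p u :=
  Finset.sum_nonneg fun i _ => mul_nonneg (hp i) (sq_nonneg _)

lemma wnormSq_upd_sub_aux (p : Fin m → ℝ) (z : PiLp 2 H) (i : Fin m) (u : H i) :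
    wnormSq p (upd z i u - z) = p i * ‖u - z i‖ ^ 2 := by
  classical
  unfold wnormSq upd
  rw [Finset.sum_eq_single i]
  · simp [Function.update_self]
  · intro j _ hj
    simp [Function.update_of_ne hj]
  · intro h; exact absurd (Finset.mem_univ i) h

lemma winner_le_sqrt_mul_aux (p : Fin m → ℝ) (hp : ∀ i, 0 ≤ p i) (a b : PiLp 2 H) :
    winner p a b ≤ Real.sqrt (wnormSq p a) * Real.sqrt (wnormSq p b) := by
  have h1 : winner p a b ≤ ∑ i, (Real.sqrt (p i) * ‖a i‖) * (Real.sqrt (p i) * ‖b i‖) := by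
    refine Finset.sum_le_sum fun i _ => ?_
    have : (Real.sqrt (p i) * ‖a i‖) * (Real.sqrt (p i) * ‖b i‖)
        = p i * (‖a i‖ * ‖b i‖) := by
      rw [show (Real.sqrt (p i) * ‖a i‖) * (Real.sqrt (p i) * ‖b i‖)
        = (Real.sqrt (p i) * Real.sqrt (p i)) * (‖a i‖ * ‖b i‖) by ring,
        Real.mul_self_sqrt (hp i)]
    rw [this]
    exact mul_le_mul_of_nonneg_left (real_inner_le_norm _ _) (hp i)
  set t := ∑ i, (Real.sqrt (p i) * ‖a i‖) * (Real.sqrt (p i) * ‖b i‖) with ht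
  have ht0 : 0 ≤ t := Finset.sum_nonneg fun i _ =>
    mul_nonneg (mul_nonneg (Real.sqrt_nonneg _) (norm_nonneg _))
      (mul_nonneg (Real.sqrt_nonneg _) (norm_nonneg _))
  have h2 : t ^ 2 ≤ wnormSq p a * wnormSq p b := by
    have := Finset.sum_mul_sq_le_sq_mul_sq Finset.univ
      (fun i => Real.sqrt (p i) * ‖a i‖) (fun i => Real.sqrt (p i) * ‖b i‖)
    have e1 : ∀ (u : PiLp 2 H), ∑ i, (Real.sqrt (p i) * ‖u i‖) ^ 2 = wnormSq p u := by
      intro u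
      refine Finset.sum_congr rfl fun i _ => ?_
      rw [mul_pow, Real.sq_sqrt (hp i)]
    rw [e1 a, e1 b] at this
    exact this
  calc winner p a b ≤ t := h1
    _ = Real.sqrt (t ^ 2) := (Real.sqrt_sq ht0).symm
    _ ≤ Real.sqrt (wnormSq p a * wnormSq p b) := Real.sqrt_le_sqrt h2
    _ = _ := Real.sqrt_mul (wnormSq_nonneg_aux hp a) _

lemma wnormSq_le_pmax_aux (p : Fin m → ℝ) (pmax : ℝ) (hpmax : ∀ i, p i ≤ pmax)
    (a : PiLp 2 H) :
    wnormSq p a ≤ pmax * ‖a‖ ^ 2 := by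
  rw [PiLp.norm_sq_eq_of_L2, Finset.mul_sum]
  exact Finset.sum_le_sum fun i _ => mul_le_mul_of_nonneg_right (hpmax i) (sq_nonneg _)

lemma grad_diff_norm_le_aux (f' : PiLp 2 H → PiLp 2 H) (Lres : ℝ)
    (hf_lip_res : ∀ (z : PiLp 2 H) (i : Fin m) (u u' : H i),
      ‖f' (upd z i u) - f' (upd z i u')‖ ≤ Lres * ‖u - u'‖)
    (w z : PiLp 2 H) :
    ‖f' w - f' z‖ ≤ Lres * ∑ j, ‖w j - z j‖ := by
  classical
  set mix : ℕ → PiLp 2 H := fun t => WithLp.toLp 2 (fun j => if (j : ℕ) < t then w j else z j) with hmix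
  have key : ∀ n, n ≤ m → ‖f' (mix n) - f' (mix 0)‖
      ≤ Lres * ∑ j ∈ Finset.univ.filter (fun j : Fin m => (j : ℕ) < n), ‖w j - z j‖ := by
    intro n
    induction n with
    | zero => intro _; simp
    | succ n ih =>
      intro hn
      have hnm : n < m := by omega
      set i : Fin m := ⟨n, hnm⟩ with hi
      have e1 : mix (n + 1) = upd (mix n) i (w i) := by
        ext j
        simp only [hmix, upd, Function.update, WithLp.ofLp_toLp]
        by_cases hj : j = i
        · subst hj; simp [hi]
        · have : (j : ℕ) ≠ n := fun hc => hj (Fin.ext hc)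
          simp only [dif_neg hj]
          by_cases h2 : (j : ℕ) < n + 1
          · rw [if_pos h2, if_pos (by omega)]
          · rw [if_neg h2, if_neg (by omega)]
      have e2 : mix n = upd (mix n) i (z i) := by
        ext j
        simp only [hmix, upd, Function.update, WithLp.ofLp_toLp]
        by_cases hj : j = i
        · subst hj; simp [hi]
        · simp only [dif_neg hj]
      have hstep : ‖f' (mix (n + 1)) - f' (mix n)‖ ≤ Lres * ‖w i - z i‖ := by
        calc ‖f' (mix (n + 1)) - f' (mix n)‖
            = ‖f' (upd (mix n) i (w i)) - f' (upd (mix n) i (z i))‖ := by rw [← e1, ← e2]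
          _ ≤ Lres * ‖w i - z i‖ := hf_lip_res _ _ _ _
      have hfil : Finset.univ.filter (fun j : Fin m => (j : ℕ) < n + 1)
          = insert i (Finset.univ.filter (fun j : Fin m => (j : ℕ) < n)) := by
        ext j
        simp only [Finset.mem_filter, Finset.mem_univ, true_and, Finset.mem_insert,
          Fin.ext_iff, hi]
        omega
      have hnotmem : i ∉ Finset.univ.filter (fun j : Fin m => (j : ℕ) < n) := by
        simp [hi]
      rw [hfil, Finset.sum_insert hnotmem]
      have tri : ‖f' (mix (n + 1)) - f' (mix 0)‖
          ≤ ‖f' (mix (n + 1)) - f' (mix n)‖ + ‖f' (mix n) - f' (mix 0)‖ := by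
        have : f' (mix (n + 1)) - f' (mix 0)
            = (f' (mix (n + 1)) - f' (mix n)) + (f' (mix n) - f' (mix 0)) := by abel
        rw [this]; exact norm_add_le _ _
      have := ih (by omega)
      calc ‖f' (mix (n + 1)) - f' (mix 0)‖
          ≤ ‖f' (mix (n + 1)) - f' (mix n)‖ + ‖f' (mix n) - f' (mix 0)‖ := tri
        _ ≤ Lres * ‖w i - z i‖
            + Lres * ∑ j ∈ Finset.univ.filter (fun j : Fin m => (j : ℕ) < n), ‖w j - z j‖ := by
            linarith
        _ = Lres * (‖w i - z i‖
            + ∑ j ∈ Finset.univ.filter (fun j : Fin m => (j : ℕ) < n), ‖w j - z j‖) := by ring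
  have hm2 : mix m = w := by
    ext j; simp only [hmix, WithLp.ofLp_toLp]; rw [if_pos j.2]
  have h0 : mix 0 = z := by
    ext j; simp only [hmix, WithLp.ofLp_toLp]; rw [if_neg (by omega)]
  have hfull : Finset.univ.filter (fun j : Fin m => (j : ℕ) < m) = Finset.univ := by
    ext j; simp [j.2]
  have := key m le_rfl
  rw [hm2, h0, hfull] at this
  exact this

lemma coord_window_aux {Ω : Type*} (x : ℤ → Ω → PiLp 2 H) (ω : Ω) (k τ dj : ℕ)
    (hdτ : dj ≤ τ) (j : Fin m) :
    ‖x (k : ℤ) ω j - x ((k : ℤ) - dj) ω j‖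
      ≤ ∑ t ∈ Finset.range τ, ‖x ((k : ℤ) - τ + t + 1) ω j - x ((k : ℤ) - τ + t) ω j‖ := by
  set y : ℕ → H j := fun t => x ((k : ℤ) - τ + t) ω j with hy
  have e1 : x (k : ℤ) ω j = y τ := by
    simp only [hy]
    rw [show (k : ℤ) - τ + τ = (k : ℤ) by ring]
  have e2 : x ((k : ℤ) - dj) ω j = y (τ - dj) := by
    simp only [hy]
    rw [show (k : ℤ) - τ + ((τ - dj : ℕ) : ℤ) = (k : ℤ) - dj by
      push_cast [Nat.cast_sub hdτ]; ring]
  have e3 : ∀ t : ℕ, ‖x ((k : ℤ) - τ + t + 1) ω j - x ((k : ℤ) - τ + t) ω j‖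
      = ‖y (t + 1) - y t‖ := by
    intro t
    simp only [hy]
    rw [show (k : ℤ) - τ + ((t + 1 : ℕ) : ℤ) = (k : ℤ) - τ + t + 1 by push_cast; ring]
  rw [e1, e2]
  calc ‖y τ - y (τ - dj)‖ ≤ ∑ t ∈ Finset.Ico (τ - dj) τ, ‖y (t+1) - y t‖ :=
        norm_tele_aux y (τ - dj) τ (by omega)
    _ ≤ ∑ t ∈ Finset.range τ, ‖y (t+1) - y t‖ := by
        refine Finset.sum_le_sum_of_subset_of_nonneg ?_ fun t _ _ => norm_nonneg _
        rw [Finset.range_eq_Ico]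
        exact Finset.Ico_subset_Ico (Nat.zero_le _) le_rfl
    _ = ∑ t ∈ Finset.range τ, ‖x ((k : ℤ) - τ + t + 1) ω j - x ((k : ℤ) - τ + t) ω j‖ :=
        Finset.sum_congr rfl fun t _ => (e3 t).symm

lemma delta_sum_coord_le_aux {Ω : Type*} (idx : ℕ → Ω → Fin m)
    (p : Fin m → ℝ) (pmin : ℝ) (hp0 : ∀ i, 0 ≤ p i) (hpmin_pos : 0 < pmin)
    (hpmin_le : ∀ i, pmin ≤ p i)
    (x : ℤ → Ω → PiLp 2 H) (x0 : PiLp 2 H)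
    (hx_init : ∀ n : ℤ, n ≤ 0 → ∀ ω : Ω, x n ω = x0)
    (xbar : ℕ → Ω → PiLp 2 H)
    (hx_update : ∀ (k : ℕ) (ω : Ω),
      x ((k : ℤ) + 1) ω = upd (x (k : ℤ) ω) (idx k ω) (xbar k ω (idx k ω)))
    (h : ℤ) (ω : Ω) :
    ∑ j, ‖(x (h + 1) ω - x h ω) j‖
      ≤ Real.sqrt (wnormSq p (x (h + 1) ω - x h ω)) / Real.sqrt pmin := by
  rcases lt_or_ge h 0 with hneg | hpos
  · have : x (h + 1) ω = x h ω := by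
      rw [hx_init (h + 1) (by omega) ω, hx_init h (by omega) ω]
    rw [this]
    simp [wnormSq]
  · obtain ⟨n, rfl⟩ : ∃ n : ℕ, h = (n : ℤ) := ⟨h.toNat, (Int.toNat_of_nonneg hpos).symm⟩
    rw [hx_update n ω]
    set i := idx n ω with hi
    set z := x (n : ℤ) ω with hz
    set Δ : PiLp 2 H := upd z i (xbar n ω i) - z with hΔ
    have hsupp : ∀ j, j ≠ i → Δ j = 0 := by
      intro j hj
      simp only [hΔ, PiLp.sub_apply, upd, WithLp.ofLp_toLp, Function.update_of_ne hj, sub_self]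
    have hsum : ∑ j, ‖Δ j‖ = ‖Δ i‖ := by
      refine Finset.sum_eq_single i (fun j _ hj => by rw [hsupp j hj, norm_zero]) ?_
      intro hmem; exact absurd (Finset.mem_univ i) hmem
    rw [hsum]
    have h1 : pmin * ‖Δ i‖ ^ 2 ≤ wnormSq p Δ := by
      refine le_trans (mul_le_mul_of_nonneg_right (hpmin_le i) (sq_nonneg _)) ?_
      exact Finset.single_le_sum (f := fun j => p j * ‖Δ j‖ ^ 2)
        (fun j _ => mul_nonneg (hp0 j) (sq_nonneg _)) (Finset.mem_univ i)
    have h2 : Real.sqrt pmin * ‖Δ i‖ ≤ Real.sqrt (wnormSq p Δ) := by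
      have := Real.sqrt_le_sqrt h1
      rwa [Real.sqrt_mul hpmin_pos.le, Real.sqrt_sq (norm_nonneg _)] at this
    rw [le_div_iff₀ (Real.sqrt_pos.2 hpmin_pos)]
    linarith

/-- Deterministic master bound. -/
lemma det_bound_aux {Ω : Type*} (idx : ℕ → Ω → Fin m)
    (p : Fin m → ℝ) (hp_pos : ∀ i, 0 < p i)
    (pmax pmin : ℝ) (hpmax_ge : ∀ i, p i ≤ pmax) (hpmin_le : ∀ i, pmin ≤ p i)
    (hpmax_pos : 0 < pmax) (hpmin_pos : 0 < pmin)
    (τ : ℕ) (d : ℕ → Fin m → ℕ) (hd : ∀ (k : ℕ) (j : Fin m), d k j ≤ min k τ)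
    (f' : PiLp 2 H → PiLp 2 H) (Lres : ℝ) (hLres_pos : 0 < Lres)
    (hf_lip_res : ∀ (z : PiLp 2 H) (i : Fin m) (u u' : H i),
      ‖f' (upd z i u) - f' (upd z i u')‖ ≤ Lres * ‖u - u'‖)
    (x : ℤ → Ω → PiLp 2 H) (x0 : PiLp 2 H)
    (hx_init : ∀ n : ℤ, n ≤ 0 → ∀ ω : Ω, x n ω = x0)
    (xbar : ℕ → Ω → PiLp 2 H)
    (hx_update : ∀ (k : ℕ) (ω : Ω),
      x ((k : ℤ) + 1) ω = upd (x (k : ℤ) ω) (idx k ω) (xbar k ω (idx k ω)))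
    (k : ℕ) (ω : Ω) :
    winner p (f' (x (k : ℤ) ω) - f' (xhatP x d k ω)) (xbar k ω - x (k : ℤ) ω)
      ≤ (τ : ℝ) * (Lres * Real.sqrt (pmax / pmin)) * Real.sqrt pmax / 2
          * wnormSq p (xbar k ω - x (k : ℤ) ω)
        + alphaConst Lres pmax pmin
          * ∑ t ∈ Finset.range τ,
              wnormSq p (x ((k : ℤ) - τ + t + 1) ω - x ((k : ℤ) - τ + t) ω) := by
  have hp0 : ∀ i, 0 ≤ p i := fun i => (hp_pos i).le
  set a : PiLp 2 H := f' (x (k : ℤ) ω) - f' (xhatP x d k ω) with ha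
  set b : PiLp 2 H := xbar k ω - x (k : ℤ) ω with hb
  set S : ℝ := wnormSq p b with hS
  set W : ℕ → ℝ := fun t =>
    wnormSq p (x ((k : ℤ) - τ + t + 1) ω - x ((k : ℤ) - τ + t) ω) with hW
  set u : ℕ → ℝ := fun t => Real.sqrt (W t) with hu
  set sp : ℝ := Real.sqrt pmax with hsp
  set sm : ℝ := Real.sqrt pmin with hsm
  set LV : ℝ := Lres * Real.sqrt (pmax / pmin) with hLV
  have hS0 : 0 ≤ S := wnormSq_nonneg_aux hp0 b
  have hW0 : ∀ t, 0 ≤ W t := fun t => wnormSq_nonneg_aux hp0 _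
  have hsp0 : 0 < sp := Real.sqrt_pos.2 hpmax_pos
  have hsm0 : 0 < sm := Real.sqrt_pos.2 hpmin_pos
  have hLV0 : 0 ≤ LV := mul_nonneg hLres_pos.le (Real.sqrt_nonneg _)
  have hLVeq : LV = Lres * (sp / sm) := by
    rw [hLV, hsp, hsm, Real.sqrt_div hpmax_pos.le]
  have hc : alphaConst Lres pmax pmin = LV / (2 * sp) := by
    rw [alphaConst, hLV, hsp]
  have h2 : ‖a‖ ≤ Lres * ∑ j, ‖x (k : ℤ) ω j - xhatP x d k ω j‖ :=
    grad_diff_norm_le_aux f' Lres hf_lip_res _ _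
  have h3 : ∑ j, ‖x (k : ℤ) ω j - xhatP x d k ω j‖
      ≤ ∑ t ∈ Finset.range τ, u t / sm := by
    calc ∑ j, ‖x (k : ℤ) ω j - xhatP x d k ω j‖
        ≤ ∑ j, ∑ t ∈ Finset.range τ,
            ‖x ((k : ℤ) - τ + t + 1) ω j - x ((k : ℤ) - τ + t) ω j‖ := by
          refine Finset.sum_le_sum fun j _ => ?_
          have := coord_window_aux x ω k τ (d k j) ((hd k j).trans (min_le_right _ _)) j
          simpa only [xhatP, WithLp.ofLp_toLp] using this
      _ = ∑ t ∈ Finset.range τ, ∑ j,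
            ‖x ((k : ℤ) - τ + t + 1) ω j - x ((k : ℤ) - τ + t) ω j‖ := Finset.sum_comm
      _ ≤ ∑ t ∈ Finset.range τ, u t / sm := by
          refine Finset.sum_le_sum fun t _ => ?_
          have := delta_sum_coord_le_aux idx p pmin hp0 hpmin_pos hpmin_le x x0 hx_init
            xbar hx_update ((k : ℤ) - τ + t) ω
          simp only [PiLp.sub_apply] at this
          simpa [hu, hW, hsm] using this
  have h1' : Real.sqrt (wnormSq p a) ≤ sp * ‖a‖ := by
    have := Real.sqrt_le_sqrt (wnormSq_le_pmax_aux p pmax hpmax_ge a)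
    rwa [Real.sqrt_mul hpmax_pos.le, Real.sqrt_sq (norm_nonneg _)] at this
  have young_gen : ∀ L s uu vv : ℝ, 0 ≤ L → 0 < s →
      L * uu * vv ≤ L / (2 * s) * uu ^ 2 + L * s / 2 * vv ^ 2 := by
    intro L s uu vv hL hs
    rw [← mul_le_mul_iff_right₀ (show (0:ℝ) < 2 * s by positivity)]
    have e : 2 * s * (L / (2 * s) * uu ^ 2 + L * s / 2 * vv ^ 2)
        = L * uu ^ 2 + L * s ^ 2 * vv ^ 2 := by
      field_simp
    rw [e]
    nlinarith [mul_nonneg hL (sq_nonneg (uu - s * vv))]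
  have young : ∀ t, LV * u t * Real.sqrt S
      ≤ LV / (2 * sp) * W t + LV * sp / 2 * S := by
    intro t
    have hu2 : u t ^ 2 = W t := Real.sq_sqrt (hW0 t)
    have hv2 : Real.sqrt S ^ 2 = S := Real.sq_sqrt hS0
    have := young_gen LV sp (u t) (Real.sqrt S) hLV0 hsp0
    rwa [hu2, hv2] at this
  calc winner p a b
      ≤ Real.sqrt (wnormSq p a) * Real.sqrt S := winner_le_sqrt_mul_aux p hp0 a b
    _ ≤ (sp * ‖a‖) * Real.sqrt S :=
        mul_le_mul_of_nonneg_right h1' (Real.sqrt_nonneg _)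
    _ ≤ (sp * (Lres * ∑ t ∈ Finset.range τ, u t / sm)) * Real.sqrt S := by
        refine mul_le_mul_of_nonneg_right (mul_le_mul_of_nonneg_left ?_ hsp0.le)
          (Real.sqrt_nonneg _)
        exact h2.trans (mul_le_mul_of_nonneg_left h3 hLres_pos.le)
    _ = ∑ t ∈ Finset.range τ, LV * u t * Real.sqrt S := by
        rw [Finset.mul_sum, Finset.mul_sum, Finset.sum_mul]
        refine Finset.sum_congr rfl fun t _ => ?_
        rw [hLVeq]
        ring
    _ ≤ ∑ t ∈ Finset.range τ, (LV / (2 * sp) * W t + LV * sp / 2 * S) :=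
        Finset.sum_le_sum fun t _ => young t
    _ = LV / (2 * sp) * ∑ t ∈ Finset.range τ, W t + τ * (LV * sp / 2) * S := by
        rw [Finset.sum_add_distrib, ← Finset.mul_sum, Finset.sum_const,
          Finset.card_range, nsmul_eq_mul]
        ring
    _ = (τ : ℝ) * LV * sp / 2 * S + alphaConst Lres pmax pmin
          * ∑ t ∈ Finset.range τ, W t := by
        rw [hc]
        ring

lemma xbar_det_aux {Ω : Type*}
    (γ : Fin m → ℝ) (f' : PiLp 2 H → PiLp 2 H) (g : ∀ i, H i → ℝ)
    (d : ℕ → Fin m → ℕ)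
    (x : ℤ → Ω → PiLp 2 H) (xbar : ℕ → Ω → PiLp 2 H)
    (hxbar_prox : ∀ (k : ℕ) (ω : Ω) (i : Fin m),
      IsProx (γ i) (g i) (x (k : ℤ) ω i - γ i • f' (xhatP x d k ω) i) (xbar k ω i))
    (k : ℕ) (ω ω' : Ω) (hx : ∀ n : ℤ, n ≤ k → x n ω = x n ω') (i : Fin m) :
    xbar k ω i = xbar k ω' i := by
  have hxhat : xhatP x d k ω = xhatP x d k ω' := by
    ext j
    simp only [xhatP, WithLp.ofLp_toLp]
    exact congrArg (fun v : PiLp 2 H => v j) (hx ((k : ℤ) - d k j) (by omega))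
  have hv : x (k : ℤ) ω i - γ i • f' (xhatP x d k ω) i
      = x (k : ℤ) ω' i - γ i • f' (xhatP x d k ω') i := by
    rw [hx (k : ℤ) le_rfl, hxhat]
  refine (hxbar_prox k ω' i).2 (xbar k ω i) ?_
  rw [← hv]
  exact (hxbar_prox k ω i).1 (xbar k ω' i)

lemma traj_det_aux {Ω : Type*} (idx : ℕ → Ω → Fin m)
    (γ : Fin m → ℝ) (f' : PiLp 2 H → PiLp 2 H) (g : ∀ i, H i → ℝ)
    (d : ℕ → Fin m → ℕ)
    (x : ℤ → Ω → PiLp 2 H) (x0 : PiLp 2 H)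
    (hx_init : ∀ n : ℤ, n ≤ 0 → ∀ ω : Ω, x n ω = x0)
    (xbar : ℕ → Ω → PiLp 2 H)
    (hxbar_prox : ∀ (k : ℕ) (ω : Ω) (i : Fin m),
      IsProx (γ i) (g i) (x (k : ℤ) ω i - γ i • f' (xhatP x d k ω) i) (xbar k ω i))
    (hx_update : ∀ (k : ℕ) (ω : Ω),
      x ((k : ℤ) + 1) ω = upd (x (k : ℤ) ω) (idx k ω) (xbar k ω (idx k ω))) :
    ∀ (k : ℕ) (ω ω' : Ω), (∀ j, j < k → idx j ω = idx j ω') →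
      ∀ n : ℤ, n ≤ k → x n ω = x n ω' := by
  intro k
  induction k with
  | zero =>
    intro ω ω' _ n hn
    rw [hx_init n (by exact_mod_cast hn) ω, hx_init n (by exact_mod_cast hn) ω']
  | succ k ih =>
    intro ω ω' hagree n hn
    have hag' : ∀ j, j < k → idx j ω = idx j ω' := fun j hj => hagree j (by omega)
    have hxk : ∀ n : ℤ, n ≤ k → x n ω = x n ω' := ih ω ω' hag'
    rcases le_or_gt n k with h | h
    · exact hxk n h
    · have hnk : n = (k : ℤ) + 1 := by push_cast at hn ⊢; omega
      subst hnk
      have hik : idx k ω = idx k ω' := hagree k (by omega)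
      have hxb : ∀ i, xbar k ω i = xbar k ω' i :=
        xbar_det_aux γ f' g d x xbar hxbar_prox k ω ω' hxk
      rw [hx_update k ω, hx_update k ω', hxk (k : ℤ) le_rfl, hik, hxb]

lemma factor_sm_aux {Ω : Type*} [MeasurableSpace Ω] (idx : ℕ → Ω → Fin m) (k : ℕ)
    (F : Ω → ℝ) (hF : ∀ ω ω', (∀ j, j < k → idx j ω = idx j ω') → F ω = F ω') :
    StronglyMeasurable[pastFiltration idx k] F ∧ ∃ C : ℝ, ∀ ω, |F ω| ≤ C := by
  classical
  set hist : Ω → (Fin k → Fin m) := fun ω j => idx j ω with hhist_def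
  set G : (Fin k → Fin m) → ℝ :=
    fun v => if h : ∃ ω, hist ω = v then F h.choose else 0 with hG_def
  have hFG : ∀ ω, F ω = G (hist ω) := by
    intro ω
    have h : ∃ ω', hist ω' = hist ω := ⟨ω, rfl⟩
    have hch : hist h.choose = hist ω := h.choose_spec
    have : F h.choose = F ω := by
      refine hF _ _ fun j hj => ?_
      exact congrFun hch ⟨j, hj⟩
    simp only [hG_def, dif_pos h, this]
  have hhist : Measurable[pastFiltration idx k] hist := by
    refine @measurable_pi_lambda Ω (Fin k) (fun _ => Fin m) (pastFiltration idx k) _ hist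
      fun j => Measurable.of_comap_le ?_
    exact le_iSup₂_of_le (j : ℕ) (Finset.mem_range.2 j.2) le_rfl
  have hG : Measurable G := measurable_of_countable G
  constructor
  · have : F = G ∘ hist := funext hFG
    rw [this]
    exact (hG.comp hhist).stronglyMeasurable
  · refine ⟨∑ v : Fin k → Fin m, |G v|, fun ω => ?_⟩
    rw [hFG ω]
    exact Finset.single_le_sum (fun v _ => abs_nonneg (G v)) (Finset.mem_univ _)

lemma pastFiltration_le_aux {Ω : Type*} [MeasurableSpace Ω] (idx : ℕ → Ω → Fin m)
    (hidx : ∀ j, Measurable (idx j)) (k : ℕ) :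
    pastFiltration idx k ≤ ‹MeasurableSpace Ω› :=
  iSup₂_le fun j _ => (hidx j).comap_le

lemma integ_of_bdd_aux {Ω : Type*} [MeasurableSpace Ω] (P : Measure Ω) [IsFiniteMeasure P]
    {F : Ω → ℝ} (hm : AEStronglyMeasurable F P) {C : ℝ} (hC : ∀ ω, |F ω| ≤ C) :
    Integrable F P :=
  ⟨hm, HasFiniteIntegral.of_bounded (C := C)
    (Filter.Eventually.of_forall fun ω => by simpa [Real.norm_eq_abs] using hC ω)⟩

lemma indep_past_aux {Ω : Type*} [MeasurableSpace Ω] (P : Measure Ω) [IsProbabilityMeasure P]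
    (idx : ℕ → Ω → Fin m) (hidx_meas : ∀ j, Measurable (idx j))
    (hidx_iid : iIndepFun idx P) (k : ℕ) :
    Indep (MeasurableSpace.comap (idx k) ⊤) (pastFiltration idx k) P := by
  have h := indep_iSup_of_disjoint (m := fun j => MeasurableSpace.comap (idx j) ⊤)
    (fun j => (hidx_meas j).comap_le) hidx_iid.iIndep
    (S := {k}) (T := ↑(Finset.range k)) (by
      simp only [Finset.coe_range, Set.disjoint_singleton_left, Set.mem_Iio]
      omega)
  simpa [pastFiltration, iSup_singleton] using h

lemma condexp_ind_aux {Ω : Type*} [MeasurableSpace Ω] (P : Measure Ω) [IsProbabilityMeasure P]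
    (idx : ℕ → Ω → Fin m) (hidx_meas : ∀ j, Measurable (idx j))
    (hidx_iid : iIndepFun idx P)
    (p : Fin m → ℝ) (hp_pos : ∀ i, 0 < p i)
    (hp_law : ∀ (k : ℕ) (i : Fin m), P {ω | idx k ω = i} = ENNReal.ofReal (p i))
    (k : ℕ) (i : Fin m) :
    P[({ω | idx k ω = i}).indicator (fun _ => (1:ℝ)) | pastFiltration idx k]
      =ᵐ[P] fun _ => p i := by
  have hle : pastFiltration idx k ≤ ‹MeasurableSpace Ω› :=
    pastFiltration_le_aux idx hidx_meas k
  have hsm : StronglyMeasurable[MeasurableSpace.comap (idx k) ⊤]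
      (({ω | idx k ω = i}).indicator (fun _ => (1:ℝ))) := by
    refine stronglyMeasurable_const.indicator ?_
    exact ⟨{i}, trivial, by ext ω; simp⟩
  have h := condExp_indep_eq (μ := P) ((hidx_meas k).comap_le) hle hsm
    (indep_past_aux P idx hidx_meas hidx_iid k)
  refine h.trans ?_
  have hset : {ω | idx k ω = i} = idx k ⁻¹' {i} := by ext ω; simp
  have : ∫ ω, ({ω | idx k ω = i}).indicator (fun _ => (1:ℝ)) ω ∂P = p i := by
    rw [hset, integral_indicator_const (1 : ℝ) ((hidx_meas k) (MeasurableSet.singleton i))]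
    rw [← hset, measureReal_def, hp_law k i]
    simp [ENNReal.toReal_ofReal (hp_pos i).le]
  rw [this]

end AuxLemmas

/-- Lemma: delayed-gradient inner product bound. `P`-a.s., for all `k`,
`⟪∇f(x^k) - ∇f(x̂^k), x̄^{k+1} - x^k⟫_V ≤ τ L_res^V √p_max ∑_i p_i‖x̄^{k+1}_i - x^k_i‖²
  + α_k - E[α_{k+1} | i_0,…,i_{k-1}]`. -/
theorem stmt5
    [∀ i, CompleteSpace (H i)] [∀ i, TopologicalSpace.SeparableSpace (H i)]
    (hm : 0 < m)
    {Ω : Type*} [MeasurableSpace Ω] (P : Measure Ω) [IsProbabilityMeasure P]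
    (idx : ℕ → Ω → Fin m) (hidx_meas : ∀ k : ℕ, Measurable (idx k))
    (hidx_iid : iIndepFun idx P)
    (p : Fin m → ℝ) (hp_pos : ∀ i, 0 < p i)
    (hp_law : ∀ (k : ℕ) (i : Fin m), P {ω | idx k ω = i} = ENNReal.ofReal (p i))
    (τ : ℕ) (d : ℕ → Fin m → ℕ) (hd : ∀ (k : ℕ) (j : Fin m), d k j ≤ min k τ)
    (γ : Fin m → ℝ) (hγ_pos : ∀ i, 0 < γ i)
    (f : PiLp 2 H → ℝ) (f' : PiLp 2 H → PiLp 2 H)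
    (hf_grad : ∀ z : PiLp 2 H, HasGradientAt f (f' z) z)
    (hf_convex : ConvexOn ℝ Set.univ f)
    (Lres : ℝ) (hLres_pos : 0 < Lres) (L : Fin m → ℝ)
    (hf_lip_res : ∀ (z : PiLp 2 H) (i : Fin m) (u u' : H i),
      ‖f' (upd z i u) - f' (upd z i u')‖ ≤ Lres * ‖u - u'‖)
    (hf_lip_blk : ∀ (z : PiLp 2 H) (i : Fin m) (u u' : H i),
      ‖f' (upd z i u) i - f' (upd z i u') i‖ ≤ L i * ‖u - u'‖)
    (g : ∀ i, H i → ℝ) (hg_convex : ∀ i, ConvexOn ℝ Set.univ (g i))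
    (hg_lsc : ∀ i, LowerSemicontinuous (g i))
    (Fstar : ℝ) (hFstar : IsLeast (Set.range (Fobj f g)) Fstar)
    (x : ℤ → Ω → PiLp 2 H) (x0 : PiLp 2 H)
    (hx_init : ∀ n : ℤ, n ≤ 0 → ∀ ω : Ω, x n ω = x0)
    (xbar : ℕ → Ω → PiLp 2 H)
    (hxbar_prox : ∀ (k : ℕ) (ω : Ω) (i : Fin m),
      IsProx (γ i) (g i) (x (k : ℤ) ω i - γ i • f' (xhatP x d k ω) i) (xbar k ω i))
    (hx_update : ∀ (k : ℕ) (ω : Ω),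
      x ((k : ℤ) + 1) ω = upd (x (k : ℤ) ω) (idx k ω) (xbar k ω (idx k ω)))
    (pmax pmin : ℝ)
    (hpmax : IsGreatest (Set.range p) pmax) (hpmin : IsLeast (Set.range p) pmin)
 :
    ∀ᵐ ω ∂P, ∀ k : ℕ,
      winner p (f' (x (k : ℤ) ω) - f' (xhatP x d k ω)) (xbar k ω - x (k : ℤ) ω) ≤
        τ * (Lres * Real.sqrt (pmax / pmin)) * Real.sqrt pmax *
            ∑ i, p i * ‖xbar k ω i - x (k : ℤ) ω i‖ ^ 2
          + alphaV p (alphaConst Lres pmax pmin) τ x k ω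
          - (P[(fun ω' => alphaV p (alphaConst Lres pmax pmin) τ x (k + 1) ω')|pastFiltration idx k]) ω := by
    classical
  have hp0 : ∀ i, 0 ≤ p i := fun i => (hp_pos i).le
  obtain ⟨i0, hi0⟩ := hpmin.1
  have hpmin_pos : 0 < pmin := hi0 ▸ hp_pos i0
  have hpmax_ge : ∀ i, p i ≤ pmax := fun i => hpmax.2 ⟨i, rfl⟩
  have hpmin_le : ∀ i, pmin ≤ p i := fun i => hpmin.2 ⟨i, rfl⟩
  have hpmax_pos : 0 < pmax := hpmin_pos.trans_le (hi0 ▸ hpmax_ge i0)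
  set c : ℝ := alphaConst Lres pmax pmin with hcdef
  have hc0 : 0 ≤ c := by
    rw [hcdef, alphaConst]
    positivity
  have hdet := traj_det_aux idx γ f' g d x x0 hx_init xbar hxbar_prox hx_update
  rw [ae_all_iff]
  intro k
  have hle : pastFiltration idx k ≤ ‹MeasurableSpace Ω› :=
    pastFiltration_le_aux idx hidx_meas k
  haveI hfin : IsFiniteMeasure (P.trim hle) := isFiniteMeasure_trim hle
  set sfn : Fin m → Ω → ℝ := fun i ω => ‖xbar k ω i - x (k : ℤ) ω i‖ ^ 2 with hsfn
  set Y : Fin m → Ω → ℝ := fun i ω => c * τ * (p i * sfn i ω) with hY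
  set Ind : Fin m → Ω → ℝ :=
    fun i => ({ω | idx k ω = i}).indicator (fun _ => (1:ℝ)) with hInd
  set βf : Ω → ℝ := fun ω => c * ∑ j ∈ Finset.range τ,
      (j : ℝ) * wnormSq p (x ((k:ℤ) - τ + j + 1) ω - x ((k:ℤ) - τ + j) ω) with hβf
  set G : Ω → ℝ := ∑ i, Y i * Ind i with hG
  -- pointwise decomposition of `alphaV (k+1)`
  have claim1 : ∀ ω, alphaV p c τ x (k+1) ω = βf ω + G ω := by
    intro ω
    have hrhsG : G ω = c * τ * (p (idx k ω) * sfn (idx k ω) ω) := by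
      rw [hG, Finset.sum_apply]
      have hs : ∑ i, (Y i * Ind i) ω = (Y (idx k ω) * Ind (idx k ω)) ω := by
        refine Finset.sum_eq_single (idx k ω) ?_ ?_
        · intro i _ hi
          have h0 : Ind i ω = 0 := by
            simp only [hInd]
            exact Set.indicator_of_notMem (fun hmem => hi (by exact hmem.symm)) _
          simp only [Pi.mul_apply, h0, mul_zero]
        · intro hmem; exact absurd (Finset.mem_univ _) hmem
      rw [hs]
      have h1 : Ind (idx k ω) ω = 1 := by
        have hmem : ω ∈ {ω' | idx k ω' = idx k ω} := rfl
        simp only [hInd]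
        simp [Set.indicator_of_mem hmem]
      simp only [Pi.mul_apply, h1, mul_one, hY]
    have hshift := shift_sum_aux
      (fun t => wnormSq p (x ((k:ℤ) - τ + t + 1) ω - x ((k:ℤ) - τ + t) ω)) τ
    have hLHS : alphaV p c τ x (k+1) ω
        = c * ∑ j ∈ Finset.range τ, ((j:ℝ)+1) *
            wnormSq p (x ((k:ℤ) - τ + ((j+1 : ℕ) : ℤ) + 1) ω
              - x ((k:ℤ) - τ + ((j+1 : ℕ) : ℤ)) ω) := by
      rw [alphaV]
      congr 1
      refine Finset.sum_congr rfl fun j _ => ?_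
      rw [show ((k+1 : ℕ) : ℤ) - τ + j + 1 = (k:ℤ) - τ + ((j+1 : ℕ) : ℤ) + 1 by
        push_cast; ring]
      rw [show ((k+1 : ℕ) : ℤ) - τ + j = (k:ℤ) - τ + ((j+1 : ℕ) : ℤ) by
        push_cast; ring]
    have hWτ : wnormSq p (x ((k:ℤ) - τ + (τ:ℤ) + 1) ω - x ((k:ℤ) - τ + (τ:ℤ)) ω)
        = p (idx k ω) * sfn (idx k ω) ω := by
      rw [show (k:ℤ) - τ + (τ:ℤ) + 1 = (k:ℤ) + 1 by ring,
        show (k:ℤ) - τ + (τ:ℤ) = (k:ℤ) by ring]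
      rw [hx_update k ω, wnormSq_upd_sub_aux]
      try simp only [hsfn]
    rw [hLHS, hshift, hWτ, hrhsG]
    try simp only [hβf]
    try ring
  -- measurability and boundedness of the pieces
  have hβfac := factor_sm_aux idx k βf (by
    intro ω ω' hag
    simp only [hβf]
    congr 1
    refine Finset.sum_congr rfl fun j hj => ?_
    have hj' : j < τ := Finset.mem_range.1 hj
    rw [hdet k ω ω' hag ((k:ℤ) - τ + j + 1) (by omega),
      hdet k ω ω' hag ((k:ℤ) - τ + j) (by omega)])
  have hYfac : ∀ i, StronglyMeasurable[pastFiltration idx k] (Y i)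
      ∧ ∃ C : ℝ, ∀ ω, |Y i ω| ≤ C := fun i => factor_sm_aux idx k (Y i) (by
    intro ω ω' hag
    simp only [hY, hsfn]
    have hx := hdet k ω ω' hag (k:ℤ) le_rfl
    have hxb := xbar_det_aux γ f' g d x xbar hxbar_prox k ω ω' (hdet k ω ω' hag) i
    rw [hx, hxb])
  have hβint : Integrable βf P :=
    integ_of_bdd_aux P ((hβfac.1.mono hle).aestronglyMeasurable) hβfac.2.choose_spec
  have hIndsm : ∀ i, StronglyMeasurable (Ind i) := by
    intro i
    simp only [hInd]
    refine stronglyMeasurable_const.indicator ?_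
    have : {ω | idx k ω = i} = idx k ⁻¹' {i} := by ext ω; simp
    rw [this]
    exact hidx_meas k (MeasurableSet.singleton i)
  have hIndbd : ∀ i ω, |Ind i ω| ≤ 1 := by
    intro i ω
    simp only [hInd, Set.indicator_apply]
    split <;> simp
  have hYIint : ∀ i, Integrable (Y i * Ind i) P := by
    intro i
    obtain ⟨Ci, hCi⟩ := (hYfac i).2
    refine integ_of_bdd_aux P
      ((((hYfac i).1.mono hle).mul (hIndsm i)).aestronglyMeasurable) (C := Ci) ?_
    intro ω
    have h1 : |Y i ω * Ind i ω| = |Y i ω| * |Ind i ω| := abs_mul _ _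
    have h2 : |Y i ω| * |Ind i ω| ≤ Ci * 1 :=
      mul_le_mul (hCi ω) (hIndbd i ω) (abs_nonneg _) ((abs_nonneg _).trans (hCi ω))
    calc |(Y i * Ind i) ω| = |Y i ω * Ind i ω| := rfl
      _ ≤ Ci * 1 := h1 ▸ h2
      _ = Ci := mul_one Ci
  have hIndint : ∀ i, Integrable (Ind i) P := fun i =>
    integ_of_bdd_aux P (hIndsm i).aestronglyMeasurable (fun ω => hIndbd i ω)
  have hGint : Integrable G P := by
    have he : G = fun a => ∑ i, (Y i * Ind i) a := by
      funext a; rw [hG, Finset.sum_apply]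
    rw [he]
    exact integrable_finset_sum _ (fun i _ => hYIint i)
  -- conditional expectation computation
  have hmul : ∀ i, P[Y i * Ind i | pastFiltration idx k]
      =ᵐ[P] fun ω => Y i ω * p i := by
    intro i
    have h1 := condExp_mul_of_stronglyMeasurable_left (μ := P) (hYfac i).1 (hYIint i) (hIndint i)
    have h2i : P[Ind i | pastFiltration idx k] =ᵐ[P] fun _ => p i :=
      condexp_ind_aux P idx hidx_meas hidx_iid p hp_pos hp_law k i
    refine h1.trans ?_
    filter_upwards [h2i] with ω hω
    simp only [Pi.mul_apply, hω]
  have hcondA : P[(fun ω' => alphaV p c τ x (k+1) ω') | pastFiltration idx k]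
      =ᵐ[P] fun ω => βf ω + ∑ i, Y i ω * p i := by
    have e0 : (fun ω' => alphaV p c τ x (k+1) ω') = βf + G := funext fun ω => claim1 ω
    rw [e0]
    have hβc : P[βf | pastFiltration idx k] = βf :=
      condExp_of_stronglyMeasurable hle hβfac.1 hβint
    have hGc : P[G | pastFiltration idx k]
        =ᵐ[P] ∑ i, P[Y i * Ind i | pastFiltration idx k] := by
      rw [hG]
      exact condExp_finsetSum (fun i _ => hYIint i) _
    refine (condExp_add hβint hGint _).trans ?_
    rw [hβc]
    filter_upwards [hGc, ae_all_iff.2 hmul] with ω hωG hωm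
    simp only [Pi.add_apply]
    rw [hωG, Finset.sum_apply]
    exact congrArg (fun z => βf ω + z) (Finset.sum_congr rfl fun i _ => hωm i)
  -- conclusion
  filter_upwards [hcondA] with ω hω
  rw [hω]
  have hSb : (∑ i, p i * ‖xbar k ω i - x (k:ℤ) ω i‖ ^ 2)
      = wnormSq p (xbar k ω - x (k:ℤ) ω) := by
    simp [wnormSq]
  rw [hSb]
  have hdet_ineq := det_bound_aux idx p hp_pos pmax pmin hpmax_ge hpmin_le hpmax_pos
    hpmin_pos τ d hd f' Lres hLres_pos hf_lip_res x x0 hx_init xbar hx_update k ω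
  rw [← hcdef] at hdet_ineq
  have hαβ : alphaV p c τ x k ω - βf ω
      = c * ∑ t ∈ Finset.range τ,
          wnormSq p (x ((k:ℤ) - τ + t + 1) ω - x ((k:ℤ) - τ + t) ω) := by
    rw [alphaV]
    simp only [hβf]
    rw [← mul_sub, ← Finset.sum_sub_distrib]
    congr 1
    refine Finset.sum_congr rfl fun t _ => ?_
    ring
  have hYple : (∑ i, Y i ω * p i)
      ≤ (τ:ℝ) * (Lres * Real.sqrt (pmax / pmin)) * Real.sqrt pmax / 2
          * wnormSq p (xbar k ω - x (k:ℤ) ω) := by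
    have hstep : (∑ i, Y i ω * p i)
        ≤ c * τ * pmax * wnormSq p (xbar k ω - x (k:ℤ) ω) := by
      have h1 : (∑ i, Y i ω * p i) ≤ ∑ i, c * τ * pmax * (p i * sfn i ω) := by
        refine Finset.sum_le_sum fun i _ => ?_
        simp only [hY]
        have hnn : 0 ≤ c * τ * (p i * sfn i ω) := by
          have hs0 : 0 ≤ sfn i ω := by simp only [hsfn]; positivity
          exact mul_nonneg (mul_nonneg hc0 (Nat.cast_nonneg τ))
            (mul_nonneg (hp0 i) hs0)
        calc c * τ * (p i * sfn i ω) * p i ≤ c * τ * (p i * sfn i ω) * pmax :=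
              mul_le_mul_of_nonneg_left (hpmax_ge i) hnn
          _ = c * τ * pmax * (p i * sfn i ω) := by ring
      refine h1.trans (le_of_eq ?_)
      rw [wnormSq, Finset.mul_sum]
      refine Finset.sum_congr rfl fun i _ => ?_
      simp only [PiLp.sub_apply, hsfn]
      try ring
    have hcc : c * τ * pmax
        = (τ:ℝ) * (Lres * Real.sqrt (pmax / pmin)) * Real.sqrt pmax / 2 := by
      have hsp2 : Real.sqrt pmax * Real.sqrt pmax = pmax := Real.mul_self_sqrt hpmax_pos.le
      have hspne : Real.sqrt pmax ≠ 0 := ne_of_gt (Real.sqrt_pos.2 hpmax_pos)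
      have h1 : c * (2 * Real.sqrt pmax) = Lres * Real.sqrt (pmax / pmin) := by
        rw [hcdef, alphaConst]
        field_simp
      rw [← h1]
      nth_rewrite 1 [← hsp2]
      ring
    rw [hcc] at hstep
    exact hstep
  have hhalf : (τ:ℝ) * (Lres * Real.sqrt (pmax / pmin)) * Real.sqrt pmax
        * wnormSq p (xbar k ω - x (k:ℤ) ω)
      = 2 * ((τ:ℝ) * (Lres * Real.sqrt (pmax / pmin)) * Real.sqrt pmax / 2
        * wnormSq p (xbar k ω - x (k:ℤ) ω)) := by ring
  linarith [hdet_ineq, hYple, hαβ, hhalf]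
end
end

section
/- Let k ∈ ℕ and let x be an H-valued random variable measurable with respect to the σ-algebra generated by i_0, …, i_{k−1}. Then, P-almost surely: E[‖x^{k+1} − x‖²_W | i_0, …, i_{k−1}] − ‖x^k − x‖²_W = ‖x̄^{k+1} − x‖²_{Γ⁻¹} − ‖x^k − x‖²_{Γ⁻¹}, and E[‖x^{k+1} − x^k‖²_W | i_0, …, i_{k−1}] = ‖x̄^{k+1} − x^k‖²_{Γ⁻¹}. -/
open MeasureTheory ProbabilityTheory Filter Topology Set
open scoped BigOperators RealInnerProductSpace ENNReal

noncomputable section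

set_option synthInstance.maxHeartbeats 400000
set_option maxHeartbeats 1000000

variable {m : ℕ} {H : Fin m → Type*}
  [∀ i, NormedAddCommGroup (H i)] [∀ i, InnerProductSpace ℝ (H i)]

/-- A function constant on the fibers of `vec` is measurable w.r.t. `comap vec ⊤`. -/
lemma measurable_comap_of_fiber {Ω' ι E : Type*} [Nonempty Ω'] [MeasurableSpace E]
    (vec : Ω' → ι) (h : Ω' → E) (hfc : ∀ ω ω', vec ω = vec ω' → h ω = h ω') :
    Measurable[MeasurableSpace.comap vec ⊤] h := by
  classical
  set F : ι → E := fun v =>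
    if hv : ∃ ω, vec ω = v then h hv.choose else h (Classical.arbitrary Ω') with hFdef
  have hF : ∀ ω, h ω = F (vec ω) := by
    intro ω
    have hv : ∃ ω', vec ω' = vec ω := ⟨ω, rfl⟩
    simp only [hFdef, dif_pos hv]
    exact (hfc _ _ hv.choose_spec).symm
  intro s _
  have hpre : h ⁻¹' s = vec ⁻¹' (F ⁻¹' s) := by
    ext ω; simp [Set.mem_preimage, hF ω]
  rw [hpre]
  exact ⟨F ⁻¹' s, trivial, rfl⟩

/-- A real function constant on the fibers of a finite-type-valued map is bounded. -/
lemma bound_of_fiber {Ω' ι : Type*} [Finite ι] [Nonempty Ω']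
    (vec : Ω' → ι) (h : Ω' → ℝ) (hfc : ∀ ω ω', vec ω = vec ω' → h ω = h ω') :
    ∃ C : ℝ, ∀ ω, ‖h ω‖ ≤ C := by
  classical
  set F : ι → ℝ := fun v =>
    if hv : ∃ ω, vec ω = v then h hv.choose else h (Classical.arbitrary Ω') with hFdef
  have hF : ∀ ω, h ω = F (vec ω) := by
    intro ω
    have hv : ∃ ω', vec ω' = vec ω := ⟨ω, rfl⟩
    simp only [hFdef, dif_pos hv]
    exact (hfc _ _ hv.choose_spec).symm
  have hfin : (Set.range fun ω => ‖h ω‖).Finite := by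
    refine (Set.finite_range fun v => ‖F v‖).subset ?_
    rintro _ ⟨ω, rfl⟩
    exact ⟨vec ω, by simp only []; rw [← hF ω]⟩
  obtain ⟨C, hC⟩ := hfin.bddAbove
  exact ⟨C, fun ω => hC (Set.mem_range_self ω)⟩

/-- Lemma: conditional expectation of weighted norms. For `y`
measurable w.r.t. `σ(i_0,…,i_{k-1})`, a.s.
`E[‖x^{k+1} - y‖²_W | past] - ‖x^k - y‖²_W = ‖x̄^{k+1} - y‖²_{Γ⁻¹} - ‖x^k - y‖²_{Γ⁻¹}` and
`E[‖x^{k+1} - x^k‖²_W | past] = ‖x̄^{k+1} - x^k‖²_{Γ⁻¹}`. -/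
theorem stmt6
    [∀ i, CompleteSpace (H i)] [∀ i, TopologicalSpace.SeparableSpace (H i)]
    [MeasurableSpace (PiLp 2 H)] [BorelSpace (PiLp 2 H)]
    (hm : 0 < m)
    {Ω : Type*} [MeasurableSpace Ω] (P : Measure Ω) [IsProbabilityMeasure P]
    (idx : ℕ → Ω → Fin m) (hidx_meas : ∀ k : ℕ, Measurable (idx k))
    (hidx_iid : iIndepFun idx P)
    (p : Fin m → ℝ) (hp_pos : ∀ i, 0 < p i)
    (hp_law : ∀ (k : ℕ) (i : Fin m), P {ω | idx k ω = i} = ENNReal.ofReal (p i))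
    (τ : ℕ) (d : ℕ → Fin m → ℕ) (hd : ∀ (k : ℕ) (j : Fin m), d k j ≤ min k τ)
    (γ : Fin m → ℝ) (hγ_pos : ∀ i, 0 < γ i)
    (f : PiLp 2 H → ℝ) (f' : PiLp 2 H → PiLp 2 H)
    (hf_grad : ∀ z : PiLp 2 H, HasGradientAt f (f' z) z)
    (hf_convex : ConvexOn ℝ Set.univ f)
    (g : ∀ i, H i → ℝ) (hg_convex : ∀ i, ConvexOn ℝ Set.univ (g i))
    (hg_lsc : ∀ i, LowerSemicontinuous (g i))
    (x : ℤ → Ω → PiLp 2 H) (x0 : PiLp 2 H)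
    (hx_init : ∀ n : ℤ, n ≤ 0 → ∀ ω : Ω, x n ω = x0)
    (xbar : ℕ → Ω → PiLp 2 H)
    (hxbar_prox : ∀ (k : ℕ) (ω : Ω) (i : Fin m),
      IsProx (γ i) (g i) (x (k : ℤ) ω i - γ i • f' (xhatP x d k ω) i) (xbar k ω i))
    (hx_update : ∀ (k : ℕ) (ω : Ω),
      x ((k : ℤ) + 1) ω = upd (x (k : ℤ) ω) (idx k ω) (xbar k ω (idx k ω)))
    (k : ℕ) (y : Ω → PiLp 2 H) (hy : Measurable[pastFiltration idx k] y) :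
    ∀ᵐ ω ∂P,
      ((P[(fun ω' => wnormSq (fun i => (p i * γ i)⁻¹) (x ((k : ℤ) + 1) ω' - y ω')
            )|pastFiltration idx k]) ω
          - wnormSq (fun i => (p i * γ i)⁻¹) (x (k : ℤ) ω - y ω)
        = wnormSq (fun i => (γ i)⁻¹) (xbar k ω - y ω)
          - wnormSq (fun i => (γ i)⁻¹) (x (k : ℤ) ω - y ω)) ∧
      (P[(fun ω' => wnormSq (fun i => (p i * γ i)⁻¹) (x ((k : ℤ) + 1) ω' - x (k : ℤ) ω')
            )|pastFiltration idx k]) ω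
        = wnormSq (fun i => (γ i)⁻¹) (xbar k ω - x (k : ℤ) ω) := by
  classical
  have hΩne : Nonempty Ω := by
    by_contra hne
    rw [not_nonempty_iff] at hne
    have h1 : P Set.univ = 1 := measure_univ
    rw [Set.univ_eq_empty_iff.mpr hne] at h1
    simp at h1
  set vec : Ω → (Fin k → Fin m) := fun ω j => idx (j : ℕ) ω with hvecdef
  set vecK : Ω → (Fin (k+1) → Fin m) := fun ω j => idx (j : ℕ) ω with hvecKdef
  have hpf_eq : pastFiltration idx k = MeasurableSpace.comap vec ⊤ := by
    apply le_antisymm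
    · refine iSup₂_le fun j hj => ?_
      have hjk : j < k := Finset.mem_range.mp hj
      have hcomp : idx j = (fun v : Fin k → Fin m => v ⟨j, hjk⟩) ∘ vec := rfl
      rw [hcomp, ← MeasurableSpace.comap_comp]
      exact MeasurableSpace.comap_mono le_top
    · rintro s ⟨t, -, rfl⟩
      have ht : vec ⁻¹' t = ⋃ v ∈ t, ⋂ j : Fin k, idx (j : ℕ) ⁻¹' {v j} := by
        ext ω
        simp only [Set.mem_preimage, Set.mem_iUnion, Set.mem_iInter, Set.mem_singleton_iff]
        constructor
        · intro h; exact ⟨vec ω, h, fun j => rfl⟩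
        · rintro ⟨v, hv, hvj⟩
          have hvv : vec ω = v := funext hvj
          rwa [hvv]
      rw [ht]
      refine (Set.toFinite t).measurableSet_biUnion fun v _ => MeasurableSet.iInter fun j => ?_
      have hle : MeasurableSpace.comap (idx (j : ℕ)) ⊤ ≤ pastFiltration idx k :=
        le_iSup₂ (f := fun (i : ℕ) (_ : i ∈ Finset.range k) => MeasurableSpace.comap (idx i) ⊤)
          (j : ℕ) (Finset.mem_range.mpr j.2)
      exact hle _ ⟨{v j}, trivial, rfl⟩
  have hpf_le : pastFiltration idx k ≤ ‹MeasurableSpace Ω› := by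
    refine iSup₂_le fun j _ => ?_
    rintro s ⟨t, -, rfl⟩
    exact hidx_meas j MeasurableSet.of_discrete
  have hcomapK_le : MeasurableSpace.comap vecK ⊤ ≤ ‹MeasurableSpace Ω› := by
    rintro s ⟨t, -, rfl⟩
    exact (measurable_pi_lambda vecK fun j => hidx_meas (j : ℕ)) MeasurableSet.of_discrete
  -- fiber constancy of the trajectory
  have hxbar_eq : ∀ (ω ω' : Ω) (j : ℕ), x (j : ℤ) ω = x (j : ℤ) ω' →
      xhatP x d j ω = xhatP x d j ω' → xbar j ω = xbar j ω' := by
    intro ω ω' j h1 h2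
    ext i
    have ha := hxbar_prox j ω i
    have hb := hxbar_prox j ω' i
    rw [h1, h2] at ha
    exact hb.2 _ (ha.1 _)
  have traj : ∀ (K : ℕ) (ω ω' : Ω), (∀ j : ℕ, j < K → idx j ω = idx j ω') →
      ∀ n : ℕ, n ≤ K → x (n : ℤ) ω = x (n : ℤ) ω' := by
    intro K ω ω' hidxeq n
    induction n using Nat.strong_induction_on with
    | _ n IH =>
      intro hnK
      cases n with
      | zero =>
        have h00 : ((0 : ℕ) : ℤ) ≤ 0 := by omega
        rw [hx_init _ h00 ω, hx_init _ h00 ω']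
      | succ j =>
        have hjK : j < K := hnK
        have hxj : x (j : ℤ) ω = x (j : ℤ) ω' := IH j (Nat.lt_succ_self j) (le_of_lt hjK)
        have hhat : xhatP x d j ω = xhatP x d j ω' := by
          ext i
          show x ((j : ℤ) - d j i) ω i = x ((j : ℤ) - d j i) ω' i
          have hdji : d j i ≤ j := le_trans (hd j i) (min_le_left _ _)
          have hcast : (j : ℤ) - (d j i : ℤ) = ((j - d j i : ℕ) : ℤ) := by omega
          rw [hcast, IH (j - d j i) (by omega) (by omega)]
        have hcs : ((j + 1 : ℕ) : ℤ) = (j : ℤ) + 1 := by push_cast; ring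
        rw [hcs, hx_update j ω, hx_update j ω', hxj, hxbar_eq ω ω' j hxj hhat, hidxeq j hjK]
  have trajZ : ∀ (K : ℕ) (ω ω' : Ω), (∀ j : ℕ, j < K → idx j ω = idx j ω') →
      ∀ n : ℤ, n ≤ (K : ℤ) → x n ω = x n ω' := by
    intro K ω ω' hidxeq n hn
    rcases le_or_gt n 0 with h0 | h0
    · rw [hx_init n h0 ω, hx_init n h0 ω']
    · have hn' : n = ((n.toNat : ℕ) : ℤ) := (Int.toNat_of_nonneg h0.le).symm
      rw [hn']
      exact traj K ω ω' hidxeq n.toNat (by omega)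
  have hxbar_fc : ∀ ω ω', (∀ j : ℕ, j < k → idx j ω = idx j ω') → xbar k ω = xbar k ω' := by
    intro ω ω' hidxeq
    refine hxbar_eq ω ω' k (traj k ω ω' hidxeq k le_rfl) ?_
    ext i
    show x ((k : ℤ) - d k i) ω i = x ((k : ℤ) - d k i) ω' i
    rw [trajZ k ω ω' hidxeq _ (by omega)]
  have hy_fc : ∀ ω ω', (∀ j : ℕ, j < k → idx j ω = idx j ω') → y ω = y ω' := by
    intro ω ω' hidxeq
    have hvec : vec ω = vec ω' := funext fun j => hidxeq (j : ℕ) j.2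
    have hy' : Measurable[MeasurableSpace.comap vec ⊤] y := hpf_eq ▸ hy
    have hsing : MeasurableSet ({y ω} : Set (PiLp 2 H)) := isClosed_singleton.measurableSet
    obtain ⟨t, -, ht⟩ := hy' hsing
    have hω : vec ω ∈ t := by
      have : ω ∈ vec ⁻¹' t := by rw [ht]; exact rfl
      exact this
    have hω' : ω' ∈ vec ⁻¹' t := by rw [Set.mem_preimage, ← hvec]; exact hω
    rw [ht] at hω'
    exact (Set.mem_singleton_iff.mp hω').symm
  have hKk : ∀ ω ω', vecK ω = vecK ω' → ∀ j : ℕ, j < k → idx j ω = idx j ω' := by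
    intro ω ω' h j hj
    exact congrFun h ⟨j, by omega⟩
  -- the key computation, for any fiber-constant z
  have key : ∀ z : Ω → PiLp 2 H, (∀ ω ω', (∀ j : ℕ, j < k → idx j ω = idx j ω') → z ω = z ω') →
      (P[(fun ω' => wnormSq (fun i => (p i * γ i)⁻¹) (x ((k : ℤ) + 1) ω' - z ω'))|pastFiltration idx k])
        =ᵐ[P] fun ω => wnormSq (fun i => (p i * γ i)⁻¹) (x (k : ℤ) ω - z ω)
          + (wnormSq (fun i => (γ i)⁻¹) (xbar k ω - z ω)
             - wnormSq (fun i => (γ i)⁻¹) (x (k : ℤ) ω - z ω)) := by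
    intro z hz_fc
    set G : Ω → ℝ := fun ω => wnormSq (fun i => (p i * γ i)⁻¹) (x (k : ℤ) ω - z ω) with hGdef
    set c : Fin m → Ω → ℝ := fun i ω => (p i * γ i)⁻¹ *
      (‖xbar k ω i - z ω i‖ ^ 2 - ‖x (k : ℤ) ω i - z ω i‖ ^ 2) with hcdef
    set χ : Fin m → Ω → ℝ := fun i => (idx k ⁻¹' {i}).indicator (fun _ => (1 : ℝ)) with hχdef
    have hxk_fc : ∀ ω ω', vec ω = vec ω' → x (k : ℤ) ω = x (k : ℤ) ω' := fun ω ω' h =>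
      trajZ k ω ω' (fun j hj => congrFun h ⟨j, hj⟩) _ le_rfl
    have hxbar_fc' : ∀ ω ω', vec ω = vec ω' → xbar k ω = xbar k ω' := fun ω ω' h =>
      hxbar_fc ω ω' (fun j hj => congrFun h ⟨j, hj⟩)
    have hz_fc' : ∀ ω ω', vec ω = vec ω' → z ω = z ω' := fun ω ω' h =>
      hz_fc ω ω' (fun j hj => congrFun h ⟨j, hj⟩)
    have hG_fc : ∀ ω ω', vec ω = vec ω' → G ω = G ω' := by
      intro ω ω' h
      simp only [hGdef]
      rw [hxk_fc ω ω' h, hz_fc' ω ω' h]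
    have hc_fc : ∀ i ω ω', vec ω = vec ω' → c i ω = c i ω' := by
      intro i ω ω' h
      simp only [hcdef]
      rw [hxk_fc ω ω' h, hz_fc' ω ω' h, hxbar_fc' ω ω' h]
    have hG_meas : Measurable[pastFiltration idx k] G := by
      rw [hpf_eq]; exact measurable_comap_of_fiber vec G hG_fc
    have hc_meas : ∀ i, Measurable[pastFiltration idx k] (c i) := fun i => by
      rw [hpf_eq]; exact measurable_comap_of_fiber vec (c i) (hc_fc i)
    have hK_fc_int : ∀ h : Ω → ℝ, (∀ ω ω', vecK ω = vecK ω' → h ω = h ω') → Integrable h P := by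
      intro h hfc
      obtain ⟨C, hC⟩ := bound_of_fiber vecK h hfc
      have hmeas : Measurable h := (measurable_comap_of_fiber vecK h hfc).mono hcomapK_le le_rfl
      exact Integrable.mono' (integrable_const C) hmeas.aestronglyMeasurable (ae_of_all _ hC)
    have hvKv : ∀ ω ω', vecK ω = vecK ω' → vec ω = vec ω' := by
      intro ω ω' h
      exact funext fun j => hKk ω ω' h (j : ℕ) j.2
    have hG_int : Integrable G P := hK_fc_int G (fun ω ω' h => hG_fc ω ω' (hvKv ω ω' h))
    have hχc_int : ∀ i, Integrable (χ i * c i) P := by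
      intro i
      refine hK_fc_int _ (fun ω ω' h => ?_)
      have hidxk : idx k ω = idx k ω' := congrFun h ⟨k, by omega⟩
      simp only [Pi.mul_apply, hχdef]
      rw [hc_fc i ω ω' (hvKv ω ω' h)]
      congr 1
      simp only [Set.indicator_apply, Set.mem_preimage, Set.mem_singleton_iff, hidxk]
    have hχ_int : ∀ i, Integrable (χ i) P := fun i =>
      (integrable_const (1 : ℝ)).indicator (hidx_meas k MeasurableSet.of_discrete)
    have hsum_int : Integrable (∑ i, χ i * c i) P :=
      integrable_finset_sum' _ (fun i _ => hχc_int i)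
    -- pointwise decomposition
    have hdecomp : (fun ω' => wnormSq (fun i => (p i * γ i)⁻¹) (x ((k : ℤ) + 1) ω' - z ω'))
        = G + ∑ i, χ i * c i := by
      funext ω
      have hterm : ∀ i : Fin m, (p i * γ i)⁻¹ * ‖(x ((k : ℤ) + 1) ω - z ω) i‖ ^ 2
          = (p i * γ i)⁻¹ * ‖(x (k : ℤ) ω - z ω) i‖ ^ 2
            + (if i = idx k ω then c (idx k ω) ω else 0) := by
        intro i
        by_cases hi : i = idx k ω
        · subst hi
          have h1 : (x ((k : ℤ) + 1) ω - z ω) (idx k ω) = xbar k ω (idx k ω) - z ω (idx k ω) := by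
            show x ((k : ℤ) + 1) ω (idx k ω) - z ω (idx k ω) = _
            rw [hx_update k ω]
            show Function.update (x (k : ℤ) ω) (idx k ω) (xbar k ω (idx k ω)) (idx k ω)
              - z ω (idx k ω) = _
            rw [Function.update_self]
          have h2 : (x (k : ℤ) ω - z ω) (idx k ω)
              = x (k : ℤ) ω (idx k ω) - z ω (idx k ω) := rfl
          rw [h1, h2, if_pos rfl]
          simp only [hcdef]
          ring
        · rw [if_neg hi]
          have h1 : (x ((k : ℤ) + 1) ω - z ω) i = x (k : ℤ) ω i - z ω i := by
            show x ((k : ℤ) + 1) ω i - z ω i = _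
            rw [hx_update k ω]
            show Function.update (x (k : ℤ) ω) (idx k ω) (xbar k ω (idx k ω)) i - z ω i = _
            rw [Function.update_of_ne hi]
          rw [h1, add_zero]
          rfl
      have hL : wnormSq (fun i => (p i * γ i)⁻¹) (x ((k : ℤ) + 1) ω - z ω)
          = G ω + c (idx k ω) ω := by
        show (∑ i, (p i * γ i)⁻¹ * ‖(x ((k : ℤ) + 1) ω - z ω) i‖ ^ 2) = _
        rw [Finset.sum_congr rfl (fun i _ => hterm i), Finset.sum_add_distrib,
          Finset.sum_ite_eq' Finset.univ (idx k ω) (fun _ => c (idx k ω) ω),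
          if_pos (Finset.mem_univ _)]
        rfl
      have hR : (G + ∑ i, χ i * c i) ω = G ω + c (idx k ω) ω := by
        simp only [Pi.add_apply, Finset.sum_apply, Pi.mul_apply]
        congr 1
        have hterm2 : ∀ i : Fin m, χ i ω * c i ω = if idx k ω = i then c i ω else 0 := by
          intro i
          simp only [hχdef, Set.indicator_apply, Set.mem_preimage, Set.mem_singleton_iff]
          by_cases h : idx k ω = i
          · rw [if_pos h, if_pos h, one_mul]
          · rw [if_neg h, if_neg h, zero_mul]
        rw [Finset.sum_congr rfl (fun i _ => hterm2 i),
          Finset.sum_ite_eq Finset.univ (idx k ω) (fun i => c i ω), if_pos (Finset.mem_univ _)]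
      exact hL.trans hR.symm
    -- conditional expectation computation
    have hcomapk_le : MeasurableSpace.comap (idx k) ⊤ ≤ ‹MeasurableSpace Ω› := by
      rintro s ⟨t, -, rfl⟩
      exact hidx_meas k MeasurableSet.of_discrete
    have hindep : ProbabilityTheory.Indep (MeasurableSpace.comap (idx k) ⊤)
        (pastFiltration idx k) P := by
      have hle' : ∀ j : ℕ, MeasurableSpace.comap (idx j) ⊤ ≤ ‹MeasurableSpace Ω› := by
        intro j; rintro s ⟨t, -, rfl⟩; exact hidx_meas j MeasurableSet.of_discrete
      have hdisj : Disjoint ({k} : Set ℕ) {n : ℕ | n < k} := by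
        simp [Set.disjoint_left]
      have h2 := ProbabilityTheory.indep_iSup_of_disjoint hle' hidx_iid hdisj
      have e1 : (⨆ j ∈ ({k} : Set ℕ), MeasurableSpace.comap (idx j) ⊤)
          = MeasurableSpace.comap (idx k) ⊤ := by simp
      have e2 : (⨆ j ∈ {n : ℕ | n < k}, MeasurableSpace.comap (idx j) ⊤)
          = pastFiltration idx k := by
        refine le_antisymm (iSup₂_le fun j hj => ?_) (iSup₂_le fun j hj => ?_)
        · exact le_iSup₂ (f := fun (i : ℕ) (_ : i ∈ Finset.range k) =>
            MeasurableSpace.comap (idx i) ⊤) j (Finset.mem_range.mpr hj)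
        · exact le_iSup₂ (f := fun (i : ℕ) (_ : i ∈ {n : ℕ | n < k}) =>
            MeasurableSpace.comap (idx i) ⊤) j (Finset.mem_range.mp hj)
      rw [e1, e2] at h2
      exact h2
    have hterm : ∀ i, P[χ i * c i|pastFiltration idx k] =ᵐ[P] fun ω => p i * c i ω := by
      intro i
      have hcm : (χ i * c i) = (c i * χ i) := by funext ω; exact mul_comm _ _
      have hmul := condExp_mul_of_stronglyMeasurable_left (μ := P) (m := pastFiltration idx k)
        ((hc_meas i).stronglyMeasurable) (hcm ▸ hχc_int i) (hχ_int i)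
      have hA : MeasurableSet[MeasurableSpace.comap (idx k) ⊤] (idx k ⁻¹' {i}) :=
        ⟨{i}, trivial, rfl⟩
      have hsm : StronglyMeasurable[MeasurableSpace.comap (idx k) ⊤] (χ i) := by
        simp only [hχdef]
        exact stronglyMeasurable_const.indicator hA
      have hind := condExp_indep_eq (μ := P) hcomapk_le hpf_le hsm hindep
      have hintχ : (∫ ω, χ i ω ∂P) = p i := by
        simp only [hχdef]
        rw [MeasureTheory.integral_indicator_const (1 : ℝ)
          (hidx_meas k MeasurableSet.of_discrete)]
        rw [smul_eq_mul, mul_one]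
        have hps : idx k ⁻¹' {i} = {ω | idx k ω = i} := rfl
        rw [hps, measureReal_def, hp_law k i, ENNReal.toReal_ofReal (hp_pos i).le]
      rw [hcm]
      refine hmul.trans ?_
      filter_upwards [hind] with ω hω
      simp only [Pi.mul_apply, hω, hintχ]
      exact mul_comm _ _
    have hterms : ∀ᵐ ω ∂P, ∀ i, (P[χ i * c i|pastFiltration idx k]) ω = p i * c i ω :=
      (MeasureTheory.ae_all_iff).mpr hterm
    have hGc : P[G|pastFiltration idx k] = G :=
      condExp_of_stronglyMeasurable hpf_le hG_meas.stronglyMeasurable hG_int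
    have hstep : (P[(fun ω' => wnormSq (fun i => (p i * γ i)⁻¹) (x ((k : ℤ) + 1) ω' - z ω'))|pastFiltration idx k]) =ᵐ[P] fun ω => G ω + ∑ i, p i * c i ω := by
      rw [hdecomp]
      filter_upwards [condExp_add (μ := P) (m := pastFiltration idx k) hG_int hsum_int,
        condExp_finset_sum (μ := P) (m := pastFiltration idx k)
          (fun i (_ : i ∈ Finset.univ) => hχc_int i), hterms] with ω h1 h2 h3
      rw [h1, Pi.add_apply, hGc, h2, Finset.sum_apply]
      congr 1
      exact Finset.sum_congr rfl fun i _ => h3 i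
    refine hstep.trans (Filter.Eventually.of_forall fun ω => ?_)
    show G ω + (∑ i, p i * c i ω) = _
    have hsum : (∑ i, p i * c i ω)
        = wnormSq (fun i => (γ i)⁻¹) (xbar k ω - z ω)
          - wnormSq (fun i => (γ i)⁻¹) (x (k : ℤ) ω - z ω) := by
      show _ = (∑ i, (γ i)⁻¹ * ‖(xbar k ω - z ω) i‖ ^ 2)
        - ∑ i, (γ i)⁻¹ * ‖(x (k : ℤ) ω - z ω) i‖ ^ 2
      rw [← Finset.sum_sub_distrib]
      refine Finset.sum_congr rfl fun i _ => ?_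
      simp only [hcdef]
      have h1 : (xbar k ω - z ω) i = xbar k ω i - z ω i := rfl
      have h2 : (x (k : ℤ) ω - z ω) i = x (k : ℤ) ω i - z ω i := rfl
      rw [h1, h2]
      have hpne : p i ≠ 0 := (hp_pos i).ne'
      have hγne : γ i ≠ 0 := (hγ_pos i).ne'
      field_simp
    rw [hsum]
  -- apply the key computation
  have h1 := key y hy_fc
  have h2 := key (x (k : ℤ)) (fun ω ω' h => trajZ k ω ω' h _ le_rfl)
  filter_upwards [h1, h2] with ω hy1 hy2
  constructor
  · rw [hy1]; ring
  · rw [hy2, sub_self]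
    have h0W : wnormSq (fun i => (p i * γ i)⁻¹) (0 : PiLp 2 H) = 0 := by
      show (∑ i, (p i * γ i)⁻¹ * ‖(0 : PiLp 2 H) i‖ ^ 2) = 0
      refine Finset.sum_eq_zero fun i _ => ?_
      show (p i * γ i)⁻¹ * ‖(0 : ∀ i, H i) i‖ ^ 2 = 0
      simp
    have h0Γ : wnormSq (fun i => (γ i)⁻¹) (0 : PiLp 2 H) = 0 := by
      show (∑ i, (γ i)⁻¹ * ‖(0 : PiLp 2 H) i‖ ^ 2) = 0
      refine Finset.sum_eq_zero fun i _ => ?_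
      show (γ i)⁻¹ * ‖(0 : ∀ i, H i) i‖ ^ 2 = 0
      simp
    rw [h0W, h0Γ, zero_add, sub_zero]
end
end
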